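/- For any two distinct elements h₁, h₂ ∈ H, the intersection U_{(0,h₁)} ∩ U_{(0,h₂)} equals B := X ⊔ ({0} × Y). Consequently, for any sequence (H_n) of nonempty finite subsets of H, the functions b_n := (1/|H_n|) Σ_{h∈H_n} χ_{U_{(0,h)}} : 𝒢 → ℂ satisfy sup_{γ∈𝒢} |b_n(γ) − χ_B(γ)| ≤ 1/|H_n|; in particular, if |H_n| → ∞ then b_n converges uniformly on 𝒢 to the indicator function χ_B. -/

import Mathlib

/-- The unit space `𝒢⁰ = X ⊔ Y ⊔ Z ⊔ {ε}`. -/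
inductive U0 : Type
  | x : ℕ → ℕ → U0
  | y : ℕ → U0
  | z : ℕ → U0
  | eps : U0

/-- Basic neighbourhoods `U_{y_i,F} = {y_i} ∪ (X_i \ F)` of `y_i`, where the finite set
`F ⊆ X_i` is recorded by the finite set of second indices `j`. -/
def Uy (i : ℕ) (F : Finset ℕ) : Set U0 :=
  {u | u = U0.y i ∨ ∃ j ∉ F, u = U0.x i j}

/-- Basic neighbourhoods `U_{F_Y,F_Z} = 𝒢⁰ \ (⋃_{y_i ∈ F_Y} U_{y_i,∅} ∪ F_Z)` of `ε`,
where the finite sets `F_Y ⊆ Y`, `F_Z ⊆ Z` are recorded by finite sets of indices. -/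
def UFF (FY FZ : Finset ℕ) : Set U0 :=
  ((⋃ i ∈ FY, Uy i ∅) ∪ (U0.z '' (FZ : Set ℕ)))ᶜ

/-- The topology on the unit space, generated by the basis described above. -/
instance : TopologicalSpace U0 :=
  TopologicalSpace.generateFrom
    ({s | ∃ i j, s = {U0.x i j}} ∪ {s | ∃ i, s = {U0.z i}} ∪
      {s | ∃ i F, s = Uy i F} ∪ {s | ∃ FY FZ, s = UFF FY FZ})

/-- The groupoid `𝒢 = X ⊔ ((ℤ/2) × Y) ⊔ (G × Z) ⊔ (G × {ε})`, as a set,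
where `G = (ℤ/2) × H`. -/
inductive Grpd (H : Type) : Type
  | x : ℕ → ℕ → Grpd H
  | y : ZMod 2 → ℕ → Grpd H
  | z : ZMod 2 × H → ℕ → Grpd H
  | eps : ZMod 2 × H → Grpd H

/-- The section `σ_g : 𝒢⁰ → 𝒢` associated to `g = (n,h) ∈ G`. -/
def sigmaMap {H : Type} (g : ZMod 2 × H) : U0 → Grpd H
  | U0.x i j => Grpd.x i j
  | U0.y i => Grpd.y g.1 i
  | U0.z i => Grpd.z g i
  | U0.eps => Grpd.eps g

/-- The bisection `U_g = σ_g(𝒢⁰)`. -/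
def Ug {H : Type} (g : ZMod 2 × H) : Set (Grpd H) :=
  Set.range (sigmaMap g)

/-- The topology on `𝒢`, generated by the sets `σ_g(U)` for `U ⊆ 𝒢⁰` open. -/
instance (H : Type) : TopologicalSpace (Grpd H) :=
  TopologicalSpace.generateFrom {s | ∃ (g : ZMod 2 × H) (U : Set U0), IsOpen U ∧ s = sigmaMap g '' U}

/-- The algebra `A(𝒢)`: functions of the form `f = ∑_{g ∈ T} f_g`, `T ⊆ G` finite, where each
`f_g` vanishes outside `U_g` and `f_g ∘ σ_g` is continuous. -/
def AG (H : Type) : Set (Grpd H → ℂ) :=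
  {f | ∃ (T : Finset (ZMod 2 × H)) (F : (ZMod 2 × H) → Grpd H → ℂ),
    (∀ g : ZMod 2 × H, ∀ γ ∉ Ug g, F g γ = 0) ∧
    (∀ g : ZMod 2 × H, Continuous (F g ∘ sigmaMap g)) ∧
    f = fun γ => ∑ g ∈ T, F g γ}

/-- A function on `𝒢` is singular if its support has empty interior. -/
def Singular {H : Type} (f : Grpd H → ℂ) : Prop :=
  interior {γ : Grpd H | f γ ≠ 0} = ∅

/-- The set `B = X ⊔ ({0} × Y) ⊆ 𝒢`. -/
def BSet (H : Type) : Set (Grpd H) :=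
  {γ : Grpd H | (∃ i j, γ = Grpd.x i j) ∨ (∃ i, γ = Grpd.y (0 : ZMod 2) i)}

open Classical in
lemma mem_Ug_x {H : Type} (g : ZMod 2 × H) (i j : ℕ) : Grpd.x i j ∈ Ug g :=
  ⟨U0.x i j, rfl⟩

lemma mem_Ug_y {H : Type} (g : ZMod 2 × H) (c : ZMod 2) (i : ℕ) :
    Grpd.y c i ∈ Ug g ↔ c = g.1 := by
  constructor
  · rintro ⟨u, hu⟩; cases u <;> simp [sigmaMap] at hu; exact hu.1.symm
  · rintro rfl; exact ⟨U0.y i, rfl⟩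

lemma mem_Ug_z {H : Type} (g g' : ZMod 2 × H) (i : ℕ) :
    Grpd.z g' i ∈ Ug g ↔ g' = g := by
  constructor
  · rintro ⟨u, hu⟩; cases u <;> simp [sigmaMap] at hu; exact hu.1.symm
  · rintro rfl; exact ⟨U0.z i, rfl⟩

lemma mem_Ug_eps {H : Type} (g g' : ZMod 2 × H) :
    Grpd.eps g' ∈ Ug g ↔ g' = g := by
  constructor
  · rintro ⟨u, hu⟩; cases u <;> simp [sigmaMap] at hu; exact hu.symm
  · rintro rfl; exact ⟨U0.eps, rfl⟩

open Classical in
lemma key_bound (H : Type) (s : Finset H) (hs : s.Nonempty) (γ : Grpd H) :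
    ‖(1 / (s.card : ℂ)) *
        ∑ h ∈ s, Set.indicator (Ug (((0 : ZMod 2), h))) (fun _ => (1 : ℂ)) γ -
      Set.indicator (BSet H) (fun _ => (1 : ℂ)) γ‖ ≤ 1 / (s.card : ℝ) := by
  have hc0 : (0 : ℝ) < (s.card : ℝ) := by exact_mod_cast Finset.card_pos.mpr hs
  have hcC : (s.card : ℂ) ≠ 0 := by exact_mod_cast (Finset.card_pos.mpr hs).ne'
  have hpos : (0 : ℝ) ≤ 1 / (s.card : ℝ) := by positivity
  have hB : ∀ hγ : γ ∈ BSet H,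
      ‖(1 / (s.card : ℂ)) *
          ∑ h ∈ s, Set.indicator (Ug (((0 : ZMod 2), h))) (fun _ => (1 : ℂ)) γ -
        Set.indicator (BSet H) (fun _ => (1 : ℂ)) γ‖ ≤ 1 / (s.card : ℝ) := by
    intro hγ
    have hmem : ∀ h : H, γ ∈ Ug (((0 : ZMod 2), h)) := by
      intro h
      rcases hγ with ⟨i, j, rfl⟩ | ⟨i, rfl⟩
      · exact mem_Ug_x _ i j
      · exact (mem_Ug_y _ _ _).mpr rfl
    have hsum : (∑ h ∈ s, Set.indicator (Ug (((0 : ZMod 2), h))) (fun _ => (1 : ℂ)) γ)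
        = (s.card : ℂ) := by
      rw [Finset.sum_congr rfl (fun h _ => Set.indicator_of_mem (hmem h) _)]
      simp
    rw [hsum, Set.indicator_of_mem hγ, one_div, inv_mul_cancel₀ hcC, sub_self]
    simpa using hpos
  rcases γ with ⟨i, j⟩ | ⟨c, i⟩ | ⟨g', i⟩ | g'
  · exact hB (Or.inl ⟨i, j, rfl⟩)
  · by_cases hcz : c = 0
    · subst hcz; exact hB (Or.inr ⟨i, rfl⟩)
    · have hnB : (Grpd.y c i : Grpd H) ∉ BSet H := by
        rintro (⟨_, _, h⟩ | ⟨_, h⟩) <;> simp_all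
      have hsum : (∑ h ∈ s,
          Set.indicator (Ug (((0 : ZMod 2), h))) (fun _ => (1 : ℂ)) (Grpd.y c i)) = 0 := by
        refine Finset.sum_eq_zero fun h _ => ?_
        refine Set.indicator_of_notMem ?_ _
        rw [mem_Ug_y]; exact hcz
      rw [hsum, Set.indicator_of_notMem hnB]
      simpa using hpos
  · have hnB : (Grpd.z g' i : Grpd H) ∉ BSet H := by
      rintro (⟨_, _, h⟩ | ⟨_, h⟩) <;> simp_all
    have hsum : (∑ h ∈ s,
        Set.indicator (Ug (((0 : ZMod 2), h))) (fun _ => (1 : ℂ)) (Grpd.z g' i))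
        = if g'.1 = 0 ∧ g'.2 ∈ s then 1 else 0 := by
      rw [Finset.sum_congr rfl (fun h _ => Set.indicator_apply _ _ _)]
      simp only [mem_Ug_z, Prod.ext_iff]
      by_cases h1 : g'.1 = 0
      · simp only [h1, true_and]
        rw [Finset.sum_ite_eq s g'.2 (fun _ => (1:ℂ))]
      · simp [h1]
    rw [hsum, Set.indicator_of_notMem hnB, sub_zero]
    by_cases hcond : g'.1 = 0 ∧ g'.2 ∈ s
    · simp only [hcond, if_true, mul_one, one_div, norm_inv, Complex.norm_natCast]
      simp
    · simp only [hcond, if_false, mul_zero, norm_zero]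
      exact hpos
  · have hnB : (Grpd.eps g' : Grpd H) ∉ BSet H := by
      rintro (⟨_, _, h⟩ | ⟨_, h⟩) <;> simp_all
    have hsum : (∑ h ∈ s,
        Set.indicator (Ug (((0 : ZMod 2), h))) (fun _ => (1 : ℂ)) (Grpd.eps g'))
        = if g'.1 = 0 ∧ g'.2 ∈ s then 1 else 0 := by
      rw [Finset.sum_congr rfl (fun h _ => Set.indicator_apply _ _ _)]
      simp only [mem_Ug_eps, Prod.ext_iff]
      by_cases h1 : g'.1 = 0
      · simp only [h1, true_and]
        rw [Finset.sum_ite_eq s g'.2 (fun _ => (1:ℂ))]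
      · simp [h1]
    rw [hsum, Set.indicator_of_notMem hnB, sub_zero]
    by_cases hcond : g'.1 = 0 ∧ g'.2 ∈ s
    · simp only [hcond, if_true, mul_one, one_div, norm_inv, Complex.norm_natCast]
      simp
    · simp only [hcond, if_false, mul_zero, norm_zero]
      exact hpos

theorem stmt4' (H : Type) [Group H] :
    (∀ h₁ h₂ : H, h₁ ≠ h₂ →
      Ug (((0 : ZMod 2), h₁)) ∩ Ug (((0 : ZMod 2), h₂)) = BSet H) ∧
    (∀ Hn : ℕ → Finset H, (∀ n, (Hn n).Nonempty) →
      (∀ (n : ℕ) (γ : Grpd H),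
        ‖(1 / ((Hn n).card : ℂ)) *
            ∑ h ∈ Hn n, Set.indicator (Ug (((0 : ZMod 2), h))) (fun _ => (1 : ℂ)) γ -
          Set.indicator (BSet H) (fun _ => (1 : ℂ)) γ‖ ≤ 1 / ((Hn n).card : ℝ)) ∧
      (Filter.Tendsto (fun n => (Hn n).card) Filter.atTop Filter.atTop →
        TendstoUniformly
          (fun (n : ℕ) (γ : Grpd H) => (1 / ((Hn n).card : ℂ)) *
            ∑ h ∈ Hn n, Set.indicator (Ug (((0 : ZMod 2), h))) (fun _ => (1 : ℂ)) γ)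
          (Set.indicator (BSet H) (fun _ => (1 : ℂ))) Filter.atTop)) := by
  constructor
  · intro h₁ h₂ hne
    ext γ
    constructor
    · rintro ⟨hm1, hm2⟩
      rcases γ with ⟨i, j⟩ | ⟨c, i⟩ | ⟨g', i⟩ | g'
      · exact Or.inl ⟨i, j, rfl⟩
      · exact Or.inr ⟨i, by rw [(mem_Ug_y _ _ _).mp hm1]⟩
      · exfalso
        rw [mem_Ug_z] at hm1 hm2
        exact hne (by rw [hm1] at hm2; exact (Prod.ext_iff.mp hm2).2)
      · exfalso
        rw [mem_Ug_eps] at hm1 hm2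
        exact hne (by rw [hm1] at hm2; exact (Prod.ext_iff.mp hm2).2)
    · rintro (⟨i, j, rfl⟩ | ⟨i, rfl⟩)
      · exact ⟨mem_Ug_x _ i j, mem_Ug_x _ i j⟩
      · exact ⟨(mem_Ug_y _ _ _).mpr rfl, (mem_Ug_y _ _ _).mpr rfl⟩
  · intro Hn hne
    refine ⟨fun n γ => key_bound H (Hn n) (hne n) γ, fun hcard => ?_⟩
    rw [Metric.tendstoUniformly_iff]
    intro ε hε
    have h0 : Filter.Tendsto (fun n => 1 / ((Hn n).card : ℝ)) Filter.atTop (nhds 0) :=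
      tendsto_one_div_atTop_nhds_zero_nat.comp hcard
    filter_upwards [h0.eventually (gt_mem_nhds hε)] with n hn γ
    rw [Complex.dist_eq, norm_sub_rev]
    exact lt_of_le_of_lt (key_bound H (Hn n) (hne n) γ) hn
/-- For distinct `h₁, h₂ ∈ H` one has `U_{(0,h₁)} ∩ U_{(0,h₂)} = B = X ⊔ ({0} × Y)`;
consequently for any sequence `(H_n)` of nonempty finite subsets of `H`, the averaged indicators
`b_n = (1/|H_n|) ∑_{h ∈ H_n} χ_{U_{(0,h)}}` satisfy `|b_n(γ) − χ_B(γ)| ≤ 1/|H_n|` for all `γ`,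
and converge uniformly to `χ_B` whenever `|H_n| → ∞`. -/
theorem stmt4 (H : Type) [Group H] :
    (∀ h₁ h₂ : H, h₁ ≠ h₂ →
      Ug (((0 : ZMod 2), h₁)) ∩ Ug (((0 : ZMod 2), h₂)) = BSet H) ∧
    (∀ Hn : ℕ → Finset H, (∀ n, (Hn n).Nonempty) →
      (∀ (n : ℕ) (γ : Grpd H),
        ‖(1 / ((Hn n).card : ℂ)) *
            ∑ h ∈ Hn n, Set.indicator (Ug (((0 : ZMod 2), h))) (fun _ => (1 : ℂ)) γ -
          Set.indicator (BSet H) (fun _ => (1 : ℂ)) γ‖ ≤ 1 / ((Hn n).card : ℝ)) ∧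
      (Filter.Tendsto (fun n => (Hn n).card) Filter.atTop Filter.atTop →
        TendstoUniformly
          (fun (n : ℕ) (γ : Grpd H) => (1 / ((Hn n).card : ℂ)) *
            ∑ h ∈ Hn n, Set.indicator (Ug (((0 : ZMod 2), h))) (fun _ => (1 : ℂ)) γ)
          (Set.indicator (BSet H) (fun _ => (1 : ℂ))) Filter.atTop)) := by
  exact stmt4' H
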